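/- arXiv:1805.06315 — 2 statements merged into one kernel-verified Lean document; each statement's English description precedes it below -/
import Mathlib

section
/- If the dependency relation between blocks contains a directed cycle, then there is no feasible update sequence for the update flow network. -/
/-!
A formal model of congestion-free flow rerouting (network update scheduling).
An update flow network consists of a source `s`, a terminal `t`, edge
capacities, and `k` update flow pairs, each given by an old `s`-`t` path and
an update (new) `s`-`t` path (represented as lists of vertices) with a demand.
An update sequence assigns to every update `(v, i)` (vertex `v`, pair `i`) a
round; it is feasible if resolving all updates of earlier rounds together with
any subset of the current round always leaves, for every pair, a unique valid
(capacity-respecting) transient `s`-`t` path among the active edges, and the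
family of transient paths jointly respects the capacities.
-/

namespace FlowUpdate

variable {V : Type} [DecidableEq V] {k : ℕ}

/-- The edges of a path given as a list of vertices. -/
def edgesOf (p : List V) : List (V × V) := p.zip p.tail

/-- The subpath of `p` from vertex `a` to vertex `z` (inclusive). -/
def segment (p : List V) (a z : V) : List V :=
  ((p.dropWhile (fun v => decide (v ≠ a))).takeWhile (fun v => decide (v ≠ z))) ++ [z]

/-- The outgoing edge of `v` on the path `p`, if any. -/
def outEdge (p : List V) (v : V) : Option (V × V) :=
  (edgesOf p).find? (fun e => decide (e.1 = v))

/-- An update flow network with `k` update flow pairs. -/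
structure UFN (V : Type) (k : ℕ) where
  s : V
  t : V
  cap : V → V → ℕ
  old : Fin k → List V
  new : Fin k → List V
  demand : Fin k → ℕ

namespace UFN

/-- After resolving the set of updates `U`, edge `e` is active for pair `i` iff
it is an old edge whose tail is not yet updated, or a new edge whose tail is
updated. -/
def active (G : UFN V k) (U : Set (V × Fin k)) (i : Fin k) (e : V × V) : Prop :=
  (e ∈ edgesOf (G.old i) ∧ (e.1, i) ∉ U) ∨ (e ∈ edgesOf (G.new i) ∧ (e.1, i) ∈ U)

/-- `p` is a simple `s`-`t` path all of whose edges satisfy `E`. -/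
def IsPathIn (E : V × V → Prop) (s t : V) (p : List V) : Prop :=
  p.head? = some s ∧ p.getLast? = some t ∧ List.Chain' (fun u v => E (u, v)) p ∧ p.Nodup

/-- `p` respects the capacities for the demand of pair `i`. -/
def ValidPath (G : UFN V k) (i : Fin k) (p : List V) : Prop :=
  ∀ e ∈ edgesOf p, G.demand i ≤ G.cap e.1 e.2

/-- `T` is the unique valid transient path of pair `i` after resolving `U`. -/
def TransientPair (G : UFN V k) (U : Set (V × Fin k)) (i : Fin k) (T : List V) : Prop :=
  IsPathIn (G.active U i) G.s G.t T ∧ G.ValidPath i T ∧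
    ∀ p, IsPathIn (G.active U i) G.s G.t p → G.ValidPath i p → p = T

/-- After resolving `U`, every pair has a unique valid transient path, and the
family of transient paths jointly respects the capacities. -/
def TransientFamily (G : UFN V k) (U : Set (V × Fin k)) : Prop :=
  ∃ T : Fin k → List V,
    (∀ i, G.TransientPair U i (T i)) ∧
    (∀ u v : V, (∑ i : Fin k, if (u, v) ∈ edgesOf (T i) then G.demand i else 0) ≤ G.cap u v)

/-- An update sequence (an assignment of rounds to all updates) is feasible if
after resolving all updates of rounds `< r` together with any subset of the
updates of round `r`, all pairs admit a transient family. -/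
def Feasible (G : UFN V k) (R : V × Fin k → ℕ) : Prop :=
  ∀ r : ℕ, ∀ S : Set (V × Fin k), (∀ u ∈ S, R u = r) →
    G.TransientFamily ({u | R u < r} ∪ S)

/-- `p` is a simple path from the source to the terminal. -/
def IsStPath (G : UFN V k) (p : List V) : Prop :=
  p.head? = some G.s ∧ p.getLast? = some G.t ∧ p.Nodup

/-- Well-formedness of an update flow network: all old and new flows are simple
`s`-`t` paths, each pair forms a DAG, each new path respects capacities for its
own demand, and both the old family and the new family jointly respect the
capacities. -/
def WellFormed (G : UFN V k) : Prop :=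
  (∀ i, G.IsStPath (G.old i) ∧ G.IsStPath (G.new i)) ∧
  (∀ i, ∃ ord : V → ℕ, ∀ e ∈ edgesOf (G.old i) ++ edgesOf (G.new i), ord e.1 < ord e.2) ∧
  (∀ i, G.ValidPath i (G.new i)) ∧
  (∀ u v : V, (∑ i : Fin k, if (u, v) ∈ edgesOf (G.old i) then G.demand i else 0) ≤ G.cap u v) ∧
  (∀ u v : V, (∑ i : Fin k, if (u, v) ∈ edgesOf (G.new i) then G.demand i else 0) ≤ G.cap u v)

/-- The common vertices of the old and new path of pair `i`, in path order. -/
def commons (G : UFN V k) (i : Fin k) : List V :=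
  (G.old i).filter (fun v => decide (v ∈ G.new i))

/-- A block of pair `i` is a pair `(a, z)` of consecutive common vertices of the
old and new paths of `i`. -/
def IsBlock (G : UFN V k) (i : Fin k) (b : V × V) : Prop :=
  b ∈ edgesOf (G.commons i)

/-- A (candidate) block: a pair index together with its start and end vertices. -/
abbrev Blk (V : Type) (k : ℕ) := Fin k × V × V

def IsBlk (G : UFN V k) (b : Blk V k) : Prop := G.IsBlock b.1 b.2

/-- The old-path segment of a block. -/
def blkOldSeg (G : UFN V k) (b : Blk V k) : List V := segment (G.old b.1) b.2.1 b.2.2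

/-- The update-path segment of a block. -/
def blkNewSeg (G : UFN V k) (b : Blk V k) : List V := segment (G.new b.1) b.2.1 b.2.2

/-- Block `b1` depends on block `b2` (written `b1 → b2`) if they belong to
different pairs and some edge lies on `b1`'s update path and on `b2`'s old path
with capacity less than the sum of the two demands. -/
def Dep (G : UFN V k) (b1 b2 : Blk V k) : Prop :=
  G.IsBlk b1 ∧ G.IsBlk b2 ∧ b1.1 ≠ b2.1 ∧
  ∃ e : V × V, e ∈ edgesOf (G.blkNewSeg b1) ∧ e ∈ edgesOf (G.blkOldSeg b2) ∧
    G.cap e.1 e.2 < G.demand b1.1 + G.demand b2.1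

/-- The dependency graph contains a directed cycle. -/
def HasDepCycle (G : UFN V k) : Prop := ∃ b : Blk V k, Relation.TransGen G.Dep b b

/-- The number of rounds used by an update sequence. -/
def numRounds [Fintype V] (R : V × Fin k → ℕ) : ℕ :=
  (Finset.image R Finset.univ).card

/-- An update `(v, i)` is empty if `v`'s outgoing old edge and outgoing new edge
for pair `i` coincide (in particular if `v` has no outgoing edge for pair `i`). -/
def EmptyUpd (G : UFN V k) (u : V × Fin k) : Prop :=
  outEdge (G.old u.2) u.1 = outEdge (G.new u.2) u.1

instance (G : UFN V k) (u : V × Fin k) : Decidable (G.EmptyUpd u) :=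
  inferInstanceAs (Decidable (outEdge (G.old u.2) u.1 = outEdge (G.new u.2) u.1))

/-- `R` updates every block in (at most) 3 consecutive rounds: first all internal
update-path vertices of the block, then the start vertex, then all old-path-only
vertices of the block. -/
def BlockPattern (G : UFN V k) (R : V × Fin k → ℕ) : Prop :=
  ∀ b : Blk V k, G.IsBlk b → ∃ r : ℕ,
    (∀ v ∈ G.blkNewSeg b, v ≠ b.2.1 → v ≠ b.2.2 → R (v, b.1) = r) ∧
    R (b.2.1, b.1) = r + 1 ∧
    (∀ v ∈ G.blkOldSeg b, v ∉ G.new b.1 → R (v, b.1) = r + 2)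

/-- The size of the network (total length of the flow paths). -/
def size (G : UFN V k) : ℕ := ∑ i : Fin k, ((G.old i).length + (G.new i).length)

end UFN

end FlowUpdate


namespace FlowUpdate

section ListLemmas

variable {α : Type}

lemma edgesOf_cons_cons (a b : α) (l : List α) :
    edgesOf (a :: b :: l) = (a, b) :: edgesOf (b :: l) := rfl

lemma edgesOf_subset_cons (a : α) (l : List α) : edgesOf l ⊆ edgesOf (a :: l) := by
  cases l with
  | nil => intro e he; simp [edgesOf] at he
  | cons b m => rw [edgesOf_cons_cons]; exact fun e he => List.mem_cons_of_mem _ he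

lemma mem_edgesOf : ∀ {p : List α} {e : α × α}, e ∈ edgesOf p →
    ∃ l1 l2, p = l1 ++ e.1 :: e.2 :: l2
  | [], e, h => by simp [edgesOf] at h
  | [a], e, h => by simp [edgesOf] at h
  | a :: b :: l, e, h => by
    rw [edgesOf_cons_cons, List.mem_cons] at h
    rcases h with h | h
    · exact ⟨[], l, by simp [h]⟩
    · obtain ⟨l1, l2, hl⟩ := mem_edgesOf h
      exact ⟨a :: l1, l2, by rw [List.cons_append, ← hl]⟩

lemma mem_edgesOf' {p : List α} {x y : α} (h : (x, y) ∈ edgesOf p) :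
    ∃ l1 l2, p = l1 ++ x :: y :: l2 := mem_edgesOf h

lemma edgesOf_mem : ∀ {l1 : List α} {x y : α} {l2 : List α},
    (x, y) ∈ edgesOf (l1 ++ x :: y :: l2)
  | [], x, y, l2 => by rw [List.nil_append, edgesOf_cons_cons]; exact List.mem_cons_self
  | a :: l1, x, y, l2 => by
    rw [List.cons_append]
    exact edgesOf_subset_cons a _ (edgesOf_mem (l1 := l1))

lemma edgesOf_subset_of_infix {l1 l2 : List α} (h : l1 <:+: l2) :
    edgesOf l1 ⊆ edgesOf l2 := by
  intro e he
  obtain ⟨m1, m2, hm⟩ := mem_edgesOf he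
  obtain ⟨s, t, hst⟩ := h
  have : l2 = (s ++ m1) ++ e.1 :: e.2 :: (m2 ++ t) := by
    rw [← hst, hm]; simp
  rw [this]
  exact edgesOf_mem

lemma mem_of_edgesOf {p : List α} {e : α × α} (h : e ∈ edgesOf p) :
    e.1 ∈ p ∧ e.2 ∈ p := by
  obtain ⟨l1, l2, hl⟩ := mem_edgesOf h
  subst hl
  constructor <;> simp

lemma edgesOf_succ_unique : ∀ {p : List α}, p.Nodup → ∀ {v w1 w2 : α},
    (v, w1) ∈ edgesOf p → (v, w2) ∈ edgesOf p → w1 = w2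
  | [], _, _, _, _, h, _ => by simp [edgesOf] at h
  | [a], _, _, _, _, h, _ => by simp [edgesOf] at h
  | a :: b :: l, hnd, v, w1, w2, h1, h2 => by
    rw [edgesOf_cons_cons, List.mem_cons] at h1 h2
    have hna : a ∉ b :: l := (List.nodup_cons.mp hnd).1
    rcases h1 with h1 | h1 <;> rcases h2 with h2 | h2
    · rw [Prod.mk.injEq] at h1 h2
      rw [h1.2, h2.2]
    · exfalso
      rw [Prod.mk.injEq] at h1
      exact hna (h1.1 ▸ (mem_of_edgesOf h2).1)
    · exfalso
      rw [Prod.mk.injEq] at h2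
      exact hna (h2.1 ▸ (mem_of_edgesOf h1).1)
    · exact edgesOf_succ_unique (List.nodup_cons.mp hnd).2 h1 h2

lemma edgesOf_fst_mem_dropLast : ∀ {p : List α} {e : α × α}, e ∈ edgesOf p →
    e.1 ∈ p.dropLast
  | [], e, h => by simp [edgesOf] at h
  | [a], e, h => by simp [edgesOf] at h
  | a :: b :: l, e, h => by
    rw [edgesOf_cons_cons, List.mem_cons] at h
    rw [List.dropLast_cons₂]
    rcases h with h | h
    · rw [h]; exact List.mem_cons_self
    · exact List.mem_cons_of_mem _ (edgesOf_fst_mem_dropLast h)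

lemma chain'_ord {ord : α → ℕ} : ∀ {p : List α},
    (∀ e ∈ edgesOf p, ord e.1 < ord e.2) →
    List.Chain' (fun u v => ord u < ord v) p
  | [], _ => List.isChain_nil
  | [a], _ => List.isChain_singleton a
  | a :: b :: l, h =>
    List.isChain_cons_cons.mpr ⟨h (a, b) (by rw [edgesOf_cons_cons]; exact List.mem_cons_self),
      chain'_ord (fun e he => h e (edgesOf_subset_cons a _ he))⟩

lemma pairwise_of_edges {ord : α → ℕ} {p : List α}
    (h : ∀ e ∈ edgesOf p, ord e.1 < ord e.2) :
    p.Pairwise (fun u v => ord u < ord v) := by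
  haveI : IsTrans α (fun u v => ord u < ord v) := ⟨fun _ _ _ h1 h2 => lt_trans h1 h2⟩
  exact List.isChain_iff_pairwise.mp (chain'_ord h)

lemma walk_reaches {A : α × α → Prop} (ord : α → ℕ) {po pn : List α}
    (hA : ∀ e, A e → e ∈ edgesOf po ∨ e ∈ edgesOf pn)
    (hpo : po.Pairwise (fun u v => ord u < ord v))
    (hpn : pn.Pairwise (fun u v => ord u < ord v))
    {a : α} (hao : a ∈ po) (han : a ∈ pn) :
    ∀ T : List α, List.Chain' (fun u v => A (u, v)) T →
      ∀ v, T.head? = some v → (v = a ∨ ord v < ord a) →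
        a ∈ T ∨ ∀ w, T.getLast? = some w → ord w < ord a := by
  intro T
  induction T with
  | nil => intro _ v hv _; simp at hv
  | cons x T ih =>
    intro hc v hv hva
    rw [List.head?_cons, Option.some.injEq] at hv
    subst hv
    rcases hva with rfl | hva
    · exact Or.inl (List.mem_cons_self)
    cases T with
    | nil =>
      refine Or.inr fun w hw => ?_
      simp only [List.getLast?_singleton, Option.some.injEq] at hw
      rw [← hw]; exact hva
    | cons y T' =>
      replace hc := List.isChain_cons_cons.mp hc
      have key : ∀ p : List α, p.Pairwise (fun u w => ord u < ord w) → a ∈ p →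
          (x, y) ∈ edgesOf p → y = a ∨ ord y < ord a := by
        intro p hp hap he
        obtain ⟨l1, l2, hl⟩ := mem_edgesOf' he
        subst hl
        rw [List.pairwise_append, List.pairwise_cons, List.pairwise_cons] at hp
        rcases List.mem_append.mp hap with h1 | h2
        · exact absurd (hp.2.2 a h1 x (List.mem_cons_self)) (by omega)
        · rcases List.mem_cons.mp h2 with rfl | h2
          · omega
          · rcases List.mem_cons.mp h2 with rfl | h2
            · exact Or.inl rfl
            · exact Or.inr (hp.2.1.2.1 a h2)
      have hy : y = a ∨ ord y < ord a := by
        rcases hA (x, y) hc.1 with h | h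
        · exact key po hpo hao h
        · exact key pn hpn han h
      rcases ih hc.2 y rfl (by tauto) with h | h
      · exact Or.inl (List.mem_cons_of_mem _ h)
      · exact Or.inr fun w hw => h w (by rw [List.getLast?_cons_cons] at hw; exact hw)

lemma common_mem_path {A : α × α → Prop} (ord : α → ℕ) {po pn T : List α} {s t a : α}
    (hA : ∀ e, A e → e ∈ edgesOf po ∨ e ∈ edgesOf pn)
    (hpo : po.Pairwise (fun u v => ord u < ord v))
    (hpn : pn.Pairwise (fun u v => ord u < ord v))
    (hpoh : po.head? = some s) (hpol : po.getLast? = some t)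
    (hao : a ∈ po) (han : a ∈ pn)
    (hTh : T.head? = some s) (hTl : T.getLast? = some t)
    (hTc : List.Chain' (fun u v => A (u, v)) T) : a ∈ T := by
  have hstart : s = a ∨ ord s < ord a := by
    cases po with
    | nil => simp at hpoh
    | cons x p' =>
      rw [List.head?_cons, Option.some.injEq] at hpoh
      subst hpoh
      rcases List.mem_cons.mp hao with rfl | h
      · exact Or.inl rfl
      · exact Or.inr ((List.pairwise_cons.mp hpo).1 a h)
  rcases walk_reaches ord hA hpo hpn hao han T hTc s hTh hstart with h | h
  · exact h
  · exfalso
    have hta := h t hTl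
    have hdecomp := List.dropLast_append_getLast? t hpol
    rw [← hdecomp] at hao hpo
    rw [List.pairwise_append] at hpo
    rcases List.mem_append.mp hao with h1 | h2
    · exact absurd (hpo.2.2 a h1 t (List.mem_cons_self)) (by omega)
    · simp only [List.mem_singleton] at h2
      subst h2
      omega

lemma prefix_of_forced {A : α × α → Prop} {t : α} :
    ∀ (q T : List α), List.Chain' (fun u v => A (u, v)) T →
      q.head? = T.head? → T.getLast? = some t →
      (∀ e ∈ edgesOf q, e.1 ≠ t ∧ ∀ w', A (e.1, w') → w' = e.2) →
      q <+: T := by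
  intro q
  induction q with
  | nil => intro T _ _ _ _; exact List.nil_prefix
  | cons u q' ih =>
    intro T hc hh hl hforce
    cases T with
    | nil => rw [List.head?_cons, List.head?_nil] at hh; exact absurd hh (by simp)
    | cons x T2 =>
      rw [List.head?_cons, List.head?_cons, Option.some.injEq] at hh
      subst hh
      cases q' with
      | nil => exact List.cons_prefix_cons.mpr ⟨rfl, List.nil_prefix⟩
      | cons w q'' =>
        have hforce1 := hforce (u, w)
          (by rw [edgesOf_cons_cons]; exact List.mem_cons_self)
        cases T2 with
        | nil =>
          exfalso
          apply hforce1.1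
          simpa using hl
        | cons w' T3 =>
          replace hc := List.isChain_cons_cons.mp hc
          have hww : w' = w := hforce1.2 w' hc.1
          subst hww
          refine List.cons_prefix_cons.mpr ⟨rfl, ?_⟩
          refine ih (w' :: T3) hc.2 rfl ?_ ?_
          · rw [List.getLast?_cons_cons] at hl; exact hl
          · intro e he
            exact hforce e (by rw [edgesOf_cons_cons]; exact List.mem_cons_of_mem _ he)

lemma seg_sub {A : α × α → Prop} {Q : List α} (ord : α → ℕ) {P T : List α} {t a z : α}
    {m1 n1 n2 : List α}
    (hP : P = m1 ++ a :: (n1 ++ z :: n2))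
    (hPnd : P.Nodup)
    (pP : P.Pairwise (fun u v => ord u < ord v))
    (hPl : P.getLast? = some t)
    (hn1Q : ∀ v ∈ n1, v ∉ Q)
    (hAct : ∀ u w', (u = a ∨ u ∉ Q) → A (u, w') → (u, w') ∈ edgesOf P)
    (haT : a ∈ T)
    (hTc : List.Chain' (fun u v => A (u, v)) T)
    (hTl : T.getLast? = some t) :
    edgesOf (a :: (n1 ++ [z])) ⊆ edgesOf T := by
  obtain ⟨t1, t2, hT⟩ := List.append_of_mem haT
  have hsuff : a :: t2 <:+ T := ⟨t1, hT.symm⟩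
  have hsuffC : List.Chain' (fun u v => A (u, v)) (a :: t2) := hTc.suffix hsuff
  have hsuffL : (a :: t2).getLast? = some t := by
    rw [hT, List.getLast?_append_cons] at hTl; exact hTl
  set q := a :: (n1 ++ [z]) with hq
  have hq' : q = (a :: n1) ++ [z] := by simp [hq]
  have hinfix : q <:+: P := ⟨m1, n2, by rw [hP, hq]; simp⟩
  have hqP : edgesOf q ⊆ edgesOf P := edgesOf_subset_of_infix hinfix
  have hordz : ∀ u ∈ a :: n1, ord u < ord z := by
    rw [hP] at pP
    rw [List.pairwise_append, List.pairwise_cons] at pP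
    intro u hu
    rcases List.mem_cons.mp hu with rfl | hu
    · exact pP.2.1.1 z (by simp)
    · have h2 := (List.pairwise_append.mp pP.2.1.2).2.2
      exact h2 u hu z (List.mem_cons_self)
  have hzt : ord z ≤ ord t := by
    by_cases hzt' : z = t
    · rw [hzt']
    · have hdecomp := List.dropLast_append_getLast? t hPl
      have hz : z ∈ P := by rw [hP]; simp
      rw [← hdecomp] at hz pP
      rw [List.pairwise_append] at pP
      rcases List.mem_append.mp hz with h1 | h2
      · exact le_of_lt (pP.2.2 z h1 t (List.mem_cons_self))
      · simp only [List.mem_singleton] at h2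
        exact absurd h2 hzt'
  have hforce : ∀ e ∈ edgesOf q, e.1 ≠ t ∧ ∀ w', A (e.1, w') → w' = e.2 := by
    intro e he
    have hu : e.1 ∈ a :: n1 := by
      have hh := edgesOf_fst_mem_dropLast he
      rwa [hq', List.dropLast_concat] at hh
    constructor
    · intro het
      have := hordz e.1 hu
      rw [het] at this
      omega
    · intro w' hw'
      have hcond : e.1 = a ∨ e.1 ∉ Q := by
        rcases List.mem_cons.mp hu with h | h
        · exact Or.inl h
        · exact Or.inr (hn1Q _ h)
      have h1 : (e.1, w') ∈ edgesOf P := hAct _ _ hcond hw'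
      have h2 : (e.1, e.2) ∈ edgesOf P := by rw [Prod.mk.eta]; exact hqP he
      exact edgesOf_succ_unique hPnd h1 h2
  have hpre : q <+: a :: t2 := prefix_of_forced q (a :: t2) hsuffC rfl hsuffL hforce
  intro e he
  exact edgesOf_subset_of_infix hsuff.isInfix
    (edgesOf_subset_of_infix hpre.isInfix he)

lemma dropWhile_ne [DecidableEq α] : ∀ {l1 : List α} {l2 : List α} {a : α},
    (∀ v ∈ l1, v ≠ a) →
    List.dropWhile (fun v => decide (v ≠ a)) (l1 ++ a :: l2) = a :: l2 := by
  intro l1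
  induction l1 with
  | nil => intro l2 a _; simp [List.dropWhile_cons]
  | cons x m ih =>
    intro l2 a h
    rw [List.cons_append, List.dropWhile_cons]
    have hx : x ≠ a := h x (List.mem_cons_self)
    rw [if_pos (by simpa using hx)]
    exact ih (fun v hv => h v (List.mem_cons_of_mem _ hv))

lemma takeWhile_ne [DecidableEq α] : ∀ {l1 : List α} {l2 : List α} {z : α},
    (∀ v ∈ l1, v ≠ z) →
    List.takeWhile (fun v => decide (v ≠ z)) (l1 ++ z :: l2) = l1 := by
  intro l1
  induction l1 with
  | nil => intro l2 z _; simp [List.takeWhile_cons]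
  | cons x m ih =>
    intro l2 z h
    rw [List.cons_append, List.takeWhile_cons]
    have hx : x ≠ z := h x (List.mem_cons_self)
    rw [if_pos (by simpa using hx)]
    rw [ih (fun v hv => h v (List.mem_cons_of_mem _ hv))]

lemma segment_eq [DecidableEq α] {p : List α} {a z : α} {m1 n1 n2 : List α}
    (hp : p = m1 ++ a :: (n1 ++ z :: n2)) (ham : a ∉ m1) (haz : a ≠ z) (hzn : z ∉ n1) :
    segment p a z = a :: (n1 ++ [z]) := by
  rw [hp, segment]
  rw [dropWhile_ne (fun v hv h => ham (by rw [← h]; exact hv))]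
  rw [show a :: (n1 ++ z :: n2) = (a :: n1) ++ z :: n2 by simp]
  rw [takeWhile_ne ?_]
  · simp
  · intro v hv
    rcases List.mem_cons.mp hv with rfl | hv
    · exact haz
    · exact fun h => hzn (by rw [← h]; exact hv)

end ListLemmas

section Network

variable {V : Type} [DecidableEq V] {k : ℕ}

lemma key (G : UFN V k) (hWF : G.WellFormed) {U : Set (V × Fin k)} {b : UFN.Blk V k}
    (hb : G.IsBlk b) {T : List V}
    (hT : UFN.IsPathIn (G.active U b.1) G.s G.t T) :
    ((b.2.1, b.1) ∈ U → ∀ e ∈ edgesOf (G.blkNewSeg b), e ∈ edgesOf T) ∧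
    ((b.2.1, b.1) ∉ U → ∀ e ∈ edgesOf (G.blkOldSeg b), e ∈ edgesOf T) := by
  obtain ⟨i, a, z⟩ := b
  obtain ⟨hWF1, hWF2, -⟩ := hWF
  obtain ⟨⟨hoh, hol, hond⟩, ⟨hnh, hnl, hnnd⟩⟩ := hWF1 i
  obtain ⟨ord, hord⟩ := hWF2 i
  have hordo : ∀ e ∈ edgesOf (G.old i), ord e.1 < ord e.2 :=
    fun e he => hord e (List.mem_append_left _ he)
  have hordn : ∀ e ∈ edgesOf (G.new i), ord e.1 < ord e.2 :=
    fun e he => hord e (List.mem_append_right _ he)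
  have pold := pairwise_of_edges hordo
  have pnew := pairwise_of_edges hordn
  have hbc : (a, z) ∈ edgesOf (G.commons i) := hb
  obtain ⟨c1, c2, hcd⟩ := mem_edgesOf' hbc
  have hcsub : List.Sublist (G.commons i) (G.old i) := List.filter_sublist
  have pcom : (G.commons i).Pairwise (fun u v => ord u < ord v) := pold.sublist hcsub
  have hmem : ∀ c ∈ G.commons i, c ∈ G.old i ∧ c ∈ G.new i := by
    intro c hc
    rw [UFN.commons, List.mem_filter] at hc
    exact ⟨hc.1, by simpa using hc.2⟩
  have hac := hmem a (by rw [hcd]; simp)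
  have hzc := hmem z (by rw [hcd]; simp)
  have haz_ord : ord a < ord z := by
    rw [hcd] at pcom
    rw [List.pairwise_append, List.pairwise_cons] at pcom
    exact pcom.2.1.1 z (List.mem_cons_self)
  have haz : a ≠ z := fun h => by rw [h] at haz_ord; omega
  have hbetween : ∀ c, c ∈ G.old i → c ∈ G.new i → ord a < ord c → ord c < ord z → False := by
    intro c hco hcn h1 h2
    have hc : c ∈ G.commons i := by
      rw [UFN.commons, List.mem_filter]
      exact ⟨hco, by simpa using hcn⟩
    rw [hcd] at hc pcom
    rw [List.pairwise_append, List.pairwise_cons, List.pairwise_cons] at pcom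
    rcases List.mem_append.mp hc with h | h
    · exact absurd (pcom.2.2 c h a (List.mem_cons_self)) (by omega)
    · rcases List.mem_cons.mp h with rfl | h
      · omega
      · rcases List.mem_cons.mp h with rfl | h
        · omega
        · exact absurd (pcom.2.1.2.1 c h) (by omega)
  have hdecomp : ∀ p : List V, p.Nodup → p.Pairwise (fun u v => ord u < ord v) →
      a ∈ p → z ∈ p →
      ∃ m1 n1 n2, p = m1 ++ a :: (n1 ++ z :: n2) ∧ a ∉ m1 ∧ z ∉ n1 ∧
        (∀ v ∈ n1, ord a < ord v ∧ ord v < ord z) := by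
    intro p hnd hp hap hzp
    obtain ⟨m1, m2, hm⟩ := List.append_of_mem hap
    subst hm
    rw [List.nodup_append] at hnd
    have ham1 : a ∉ m1 := fun h => hnd.2.2 _ h _ List.mem_cons_self rfl
    have hz2 : z ∈ m2 := by
      rcases List.mem_append.mp hzp with h | h
      · exfalso
        rw [List.pairwise_append] at hp
        exact absurd (hp.2.2 z h a (List.mem_cons_self)) (by omega)
      · rcases List.mem_cons.mp h with h | h
        · exact absurd h.symm haz
        · exact h
    obtain ⟨n1, n2, hn⟩ := List.append_of_mem hz2
    subst hn
    refine ⟨m1, n1, n2, rfl, ham1, ?_, ?_⟩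
    · have := (List.nodup_cons.mp hnd.2.1).2
      rw [List.nodup_append] at this
      exact fun h => this.2.2 _ h _ List.mem_cons_self rfl
    · intro v hv
      rw [List.pairwise_append, List.pairwise_cons] at hp
      constructor
      · exact hp.2.1.1 v (List.mem_append_left _ hv)
      · have h2 := (List.pairwise_append.mp hp.2.1.2).2.2
        exact h2 v hv z (List.mem_cons_self)
  obtain ⟨hTh, hTl, hTc, -⟩ := hT
  have hA : ∀ e', G.active U i e' → e' ∈ edgesOf (G.old i) ∨ e' ∈ edgesOf (G.new i) := by
    intro e' h'
    rcases h' with h' | h'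
    · exact Or.inl h'.1
    · exact Or.inr h'.1
  have haT : a ∈ T :=
    common_mem_path ord hA pold pnew hoh hol hac.1 hac.2 hTh hTl hTc
  constructor
  · intro hU e he
    obtain ⟨m1, n1, n2, hdc, ham, hzn, hbnd⟩ := hdecomp (G.new i) hnnd pnew hac.2 hzc.2
    have hseg : G.blkNewSeg (i, a, z) = a :: (n1 ++ [z]) := segment_eq hdc ham haz hzn
    have hn1Q : ∀ v ∈ n1, v ∉ G.old i := by
      intro v hv hvo
      have hvn : v ∈ G.new i := by rw [hdc]; simp [hv]
      exact hbetween v hvo hvn (hbnd v hv).1 (hbnd v hv).2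
    have hAct : ∀ u w', (u = a ∨ u ∉ G.old i) → G.active U i (u, w') →
        (u, w') ∈ edgesOf (G.new i) := by
      intro u w' hc hact
      rcases hact with ⟨ho, hno⟩ | ⟨hn, -⟩
      · exfalso
        rcases hc with rfl | hc
        · exact hno hU
        · exact hc (mem_of_edgesOf ho).1
      · exact hn
    have hsub := seg_sub (A := G.active U i) (Q := G.old i) ord hdc hnnd pnew hnl
      hn1Q hAct haT hTc hTl
    rw [hseg] at he
    exact hsub he
  · intro hU e he
    obtain ⟨m1, n1, n2, hdc, ham, hzn, hbnd⟩ := hdecomp (G.old i) hond pold hac.1 hzc.1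
    have hseg : G.blkOldSeg (i, a, z) = a :: (n1 ++ [z]) := segment_eq hdc ham haz hzn
    have hn1Q : ∀ v ∈ n1, v ∉ G.new i := by
      intro v hv hvn
      have hvo : v ∈ G.old i := by rw [hdc]; simp [hv]
      exact hbetween v hvo hvn (hbnd v hv).1 (hbnd v hv).2
    have hAct : ∀ u w', (u = a ∨ u ∉ G.new i) → G.active U i (u, w') →
        (u, w') ∈ edgesOf (G.old i) := by
      intro u w' hc hact
      rcases hact with ⟨ho, -⟩ | ⟨hn, hin⟩
      · exact ho
      · exfalso
        rcases hc with rfl | hc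
        · exact hU hin
        · exact hc (mem_of_edgesOf hn).1
    have hsub := seg_sub (A := G.active U i) (Q := G.new i) ord hdc hond pold hol
      hn1Q hAct haT hTc hTl
    rw [hseg] at he
    exact hsub he

lemma dep_lt (G : UFN V k) (hWF : G.WellFormed) {R : V × Fin k → ℕ} (hR : G.Feasible R)
    {b1 b2 : UFN.Blk V k} (hd : G.Dep b1 b2) :
    R (b2.2.1, b2.1) < R (b1.2.1, b1.1) := by
  obtain ⟨hb1, hb2, hne, e, he1, he2, hcap⟩ := hd
  by_contra hlt
  push_neg at hlt
  set r := R (b1.2.1, b1.1) with hr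
  obtain ⟨T, hTall, hcapT⟩ := hR r {(b1.2.1, b1.1)}
    (by intro u hu; rw [Set.mem_singleton_iff] at hu; rw [hu])
  set U : Set (V × Fin k) := {u | R u < r} ∪ {(b1.2.1, b1.1)} with hU
  have hU1 : (b1.2.1, b1.1) ∈ U := Or.inr rfl
  have hU2 : (b2.2.1, b2.1) ∉ U := by
    rintro (h | h)
    · rw [Set.mem_setOf_eq] at h; omega
    · exact hne ((congrArg Prod.snd h).symm)
  have he1' : e ∈ edgesOf (T b1.1) := (key G hWF hb1 (hTall b1.1).1).1 hU1 e he1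
  have he2' : e ∈ edgesOf (T b2.1) := (key G hWF hb2 (hTall b2.1).1).2 hU2 e he2
  have hsum := hcapT e.1 e.2
  have h12 : G.demand b1.1 + G.demand b2.1 ≤
      ∑ i : Fin k, if (e.1, e.2) ∈ edgesOf (T i) then G.demand i else 0 := by
    rw [← Finset.add_sum_erase _ _ (Finset.mem_univ b1.1)]
    have hi1 : (if (e.1, e.2) ∈ edgesOf (T b1.1) then G.demand b1.1 else 0) =
        G.demand b1.1 := by rw [if_pos (by rw [Prod.mk.eta]; exact he1')]
    have hi2 : G.demand b2.1 ≤
        ∑ i ∈ Finset.univ.erase b1.1,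
          if (e.1, e.2) ∈ edgesOf (T i) then G.demand i else 0 := by
      have hmem2 : b2.1 ∈ Finset.univ.erase b1.1 :=
        Finset.mem_erase.mpr ⟨fun h => hne h.symm, Finset.mem_univ _⟩
      calc G.demand b2.1 = (if (e.1, e.2) ∈ edgesOf (T b2.1) then G.demand b2.1 else 0) := by
            rw [if_pos (by rw [Prod.mk.eta]; exact he2')]
        _ ≤ _ := Finset.single_le_sum (f := fun i => if (e.1, e.2) ∈ edgesOf (T i) then G.demand i else 0) (fun i _ => Nat.zero_le _) hmem2
    rw [hi1]
    omega
  omega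

end Network

end FlowUpdate

open FlowUpdate in
/-- If the dependency relation between blocks contains a directed
cycle, then there is no feasible update sequence for the update flow network. -/
theorem stmt0 {V : Type} [DecidableEq V] {k : ℕ} (G : UFN V k)
    (hWF : G.WellFormed) (hcyc : G.HasDepCycle) :
    ¬ ∃ R : V × Fin k → ℕ, G.Feasible R := by
  rintro ⟨R, hR⟩
  obtain ⟨b, hb⟩ := hcyc
  have hmain : ∀ x y : UFN.Blk V k, Relation.TransGen G.Dep x y →
      R (y.2.1, y.1) < R (x.2.1, x.1) := by
    intro x y h
    induction h with
    | single h => exact FlowUpdate.dep_lt G hWF hR h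
    | tail _ h2 ih => exact lt_trans (FlowUpdate.dep_lt G hWF hR h2) ih
  exact lt_irrefl _ (hmain b b hb)
end

section
/- Let b be a c-block with at least 2 old-flow edges (|E(b ∩ F_c^o)| ≥ 2) and at least 2 update-flow edges (|E(b ∩ F_c^u)| ≥ 2). Then in any feasible update sequence, the updates of block b occupy at least 3 distinct rounds; if one of these edge counts is less than 2, at least 2 distinct rounds may still be required. -/
set_option linter.unusedSectionVars false

namespace FU3

open FlowUpdate

variable {V : Type} [DecidableEq V]

theorem edgesOf_cons₂ (x y : V) (l : List V) :
    edgesOf (x :: y :: l) = (x, y) :: edgesOf (y :: l) := rfl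

theorem edgesOf_length (l : List V) : (edgesOf l).length = l.length - 1 := by
  simp only [edgesOf, List.length_zip, List.length_tail]
  omega

theorem mem_of_mem_edges {u v : V} : ∀ {l : List V}, (u, v) ∈ edgesOf l → u ∈ l ∧ v ∈ l
  | [], h => by simp [edgesOf] at h
  | [x], h => by simp [edgesOf] at h
  | x :: y :: l, h => by
    rcases List.mem_cons.1 (edgesOf_cons₂ x y l ▸ h) with h | h
    · obtain ⟨rfl, rfl⟩ := Prod.mk.injEq .. ▸ Prod.ext_iff.1 h
      exact ⟨List.mem_cons_self .., List.mem_cons_of_mem _ (List.mem_cons_self ..)⟩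
    · obtain ⟨h1, h2⟩ := mem_of_mem_edges h
      exact ⟨List.mem_cons_of_mem _ h1, List.mem_cons_of_mem _ h2⟩

theorem chain'_iff_edges (R : V → V → Prop) :
    ∀ l : List V, List.Chain' R l ↔ ∀ e ∈ edgesOf l, R e.1 e.2
  | [] => by simp [edgesOf]; exact List.isChain_nil
  | [x] => by simp [edgesOf]; exact List.isChain_singleton x
  | x :: y :: l => by
    rw [show List.Chain' R (x :: y :: l) ↔ R x y ∧ List.Chain' R (y :: l) from List.isChain_cons_cons, edgesOf_cons₂, chain'_iff_edges R (y :: l)]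
    constructor
    · rintro ⟨h1, h2⟩ e he
      rcases List.mem_cons.1 he with rfl | he
      · exact h1
      · exact h2 e he
    · intro h
      exact ⟨h _ (List.mem_cons_self ..), fun e he => h e (List.mem_cons_of_mem _ he)⟩

theorem pairwise_of_edges {ord : V → ℕ} {l : List V}
    (h : ∀ e ∈ edgesOf l, ord e.1 < ord e.2) :
    l.Pairwise (fun x y => ord x < ord y) := by
  haveI : IsTrans V (fun x y => ord x < ord y) := ⟨fun a b c => Nat.lt_trans⟩
  exact List.isChain_iff_pairwise.1 ((chain'_iff_edges _ l).2 h)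

theorem edges_append_right : ∀ (l t : List V), edgesOf l ⊆ edgesOf (l ++ t)
  | [], t => by simp [edgesOf]
  | [x], t => by simp [edgesOf]
  | x :: y :: l, t => by
    intro e he
    rcases List.mem_cons.1 (edgesOf_cons₂ x y l ▸ he) with rfl | he
    · exact List.mem_cons_self ..
    · exact List.mem_cons_of_mem _ (edges_append_right (y :: l) t he)

theorem edges_append_left : ∀ (s l : List V), edgesOf l ⊆ edgesOf (s ++ l)
  | [], l => by simp
  | x :: s, l => by
    intro e he
    have h1 : e ∈ edgesOf (s ++ l) := edges_append_left s l he
    rcases h : s ++ l with _ | ⟨y, m⟩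
    · rw [h] at h1; simp [edgesOf] at h1
    · rw [show x :: s ++ l = x :: y :: m by rw [List.cons_append, h]]
      rw [h] at h1
      exact List.mem_cons_of_mem _ h1

theorem edges_infix {l p : List V} (h : l <:+: p) : edgesOf l ⊆ edgesOf p := by
  obtain ⟨s, t, rfl⟩ := h
  intro e he
  rw [List.append_assoc]
  exact edges_append_left s _ (edges_append_right l t he)

theorem next_unique : ∀ {p : List V}, p.Nodup → ∀ {v w w' : V},
    (v, w) ∈ edgesOf p → (v, w') ∈ edgesOf p → w = w'
  | [], _, _, _, _, h1, _ => by simp [edgesOf] at h1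
  | [x], _, _, _, _, h1, _ => by simp [edgesOf] at h1
  | x :: y :: l, hp, v, w, w', h1, h2 => by
    have hx : x ∉ y :: l := (List.nodup_cons.1 hp).1
    rcases List.mem_cons.1 (edgesOf_cons₂ x y l ▸ h1) with h1 | h1 <;>
      rcases List.mem_cons.1 (edgesOf_cons₂ x y l ▸ h2) with h2 | h2
    · rw [Prod.ext_iff] at h1 h2; simp at h1 h2; rw [h1.2, h2.2]
    · exfalso; rw [Prod.ext_iff] at h1; simp at h1
      exact hx (h1.1 ▸ (mem_of_mem_edges h2).1)
    · exfalso; rw [Prod.ext_iff] at h2; simp at h2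
      exact hx (h2.1 ▸ (mem_of_mem_edges h1).1)
    · exact next_unique (List.nodup_cons.1 hp).2 h1 h2

theorem exists_next : ∀ {p : List V} {t : V}, p.getLast? = some t → ∀ {v : V}, v ∈ p → v ≠ t →
    ∃ w, (v, w) ∈ edgesOf p
  | [], t, h, v, hv, _ => by simp at hv
  | [x], t, h, v, hv, hne => by
    simp at h hv; exact absurd (hv.trans h) hne
  | x :: y :: l, t, h, v, hv, hne => by
    rcases List.mem_cons.1 hv with rfl | hv
    · exact ⟨y, List.mem_cons_self ..⟩
    · have h' : (y :: l).getLast? = some t := by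
        rwa [List.getLast?_cons_cons] at h
      obtain ⟨w, hw⟩ := exists_next h' hv hne
      exact ⟨w, List.mem_cons_of_mem _ hw⟩

theorem edge_rel {R : V → V → Prop} : ∀ {l : List V}, l.Pairwise R → ∀ {u v : V},
    (u, v) ∈ edgesOf l → R u v
  | [], _, _, _, h => by simp [edgesOf] at h
  | [x], _, _, _, h => by simp [edgesOf] at h
  | x :: y :: l, hp, u, v, h => by
    rcases List.mem_cons.1 (edgesOf_cons₂ x y l ▸ h) with h | h
    · rw [Prod.ext_iff] at h; simp at h
      exact h.1 ▸ h.2 ▸ (List.pairwise_cons.1 hp).1 y (List.mem_cons_self ..)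
    · exact edge_rel (List.pairwise_cons.1 hp).2 h

theorem pairwise_head {R : V → V → Prop} {l : List V} (hp : l.Pairwise R) {s x : V}
    (hh : l.head? = some s) (hx : x ∈ l) (hne : x ≠ s) : R s x := by
  match l, hh with
  | a :: l, hh =>
    simp at hh; subst hh
    rcases List.mem_cons.1 hx with rfl | hx
    · exact absurd rfl hne
    · exact (List.pairwise_cons.1 hp).1 x hx

theorem pairwise_last {R : V → V → Prop} : ∀ {l : List V}, l.Pairwise R → ∀ {t x : V},
    l.getLast? = some t → x ∈ l → x ≠ t → R x t
  | [], _, _, _, h, _, _ => by simp at h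
  | [a], _, t, x, h, hx, hne => by
    simp at h hx; exact absurd (hx.trans h) hne
  | a :: b :: l, hp, t, x, h, hx, hne => by
    rw [List.getLast?_cons_cons] at h
    have ht : t ∈ b :: l := List.mem_of_mem_getLast? (Option.mem_def.2 h)
    rcases List.mem_cons.1 hx with hx | hx
    · rw [hx]; exact (List.pairwise_cons.1 hp).1 t ht
    · exact pairwise_last (List.pairwise_cons.1 hp).2 h hx hne

theorem pairwise_eq_of_ord {ord : V → ℕ} : ∀ {l : List V},
    l.Pairwise (fun x y => ord x < ord y) → ∀ {w x : V}, w ∈ l → x ∈ l → ord w = ord x → w = x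
  | [], _, _, _, hw, _, _ => by simp at hw
  | a :: l, hp, w, x, hw, hx, h => by
    obtain ⟨h1, h2⟩ := List.pairwise_cons.1 hp
    rcases List.mem_cons.1 hw with hw | hw
    · rcases List.mem_cons.1 hx with hx | hx
      · rw [hw, hx]
      · exact absurd (hw ▸ h) (Nat.ne_of_lt (h1 x hx))
    · rcases List.mem_cons.1 hx with hx | hx
      · exact absurd (hx ▸ h).symm (Nat.ne_of_lt (h1 w hw))
      · exact pairwise_eq_of_ord h2 hw hx h

theorem adj_no_between {ord : V → ℕ} : ∀ {c : List V},
    c.Pairwise (fun x y => ord x < ord y) → ∀ {a z y : V}, (a, z) ∈ edgesOf c → y ∈ c →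
    ord a < ord y → ord y < ord z → False
  | [], _, _, _, _, h, _, _, _ => by simp [edgesOf] at h
  | [x], _, _, _, _, h, _, _, _ => by simp [edgesOf] at h
  | x :: x' :: c, hp, a, z, y, h, hy, h1, h2 => by
    rcases List.mem_cons.1 (edgesOf_cons₂ x x' c ▸ h) with h | h
    · rw [Prod.ext_iff] at h; simp at h
      obtain ⟨rfl, rfl⟩ := h
      rcases List.mem_cons.1 hy with rfl | hy
      · omega
      · rcases List.mem_cons.1 hy with rfl | hy
        · omega
        · have := (List.pairwise_cons.1 (List.pairwise_cons.1 hp).2).1 y hy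
          omega
    · obtain ⟨hh1, hh2⟩ := List.pairwise_cons.1 hp
      rcases List.mem_cons.1 hy with hy | hy
      · have ha := hh1 a (mem_of_mem_edges h).1
        rw [hy] at h1
        omega
      · exact adj_no_between hh2 h hy h1 h2

theorem dropWhile_all {f : V → Bool} : ∀ {l1 : List V} (l2 : List V),
    (∀ x ∈ l1, f x = true) → List.dropWhile f (l1 ++ l2) = List.dropWhile f l2
  | [], l2, _ => rfl
  | x :: l1, l2, h => by
    rw [List.cons_append, List.dropWhile_cons_of_pos (h x (List.mem_cons_self ..))]
    exact dropWhile_all l2 fun y hy => h y (List.mem_cons_of_mem _ hy)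

theorem takeWhile_all {f : V → Bool} : ∀ {l1 : List V} {z : V} (l2 : List V),
    (∀ x ∈ l1, f x = true) → f z = false → List.takeWhile f (l1 ++ z :: l2) = l1
  | [], z, l2, _, hz => by simp [List.takeWhile_cons, hz]
  | x :: l1, z, l2, h, hz => by
    rw [List.cons_append, List.takeWhile_cons_of_pos (h x (List.mem_cons_self ..)),
      takeWhile_all l2 (fun y hy => h y (List.mem_cons_of_mem _ hy)) hz]

theorem head?_mem {l : List V} {s : V} (h : l.head? = some s) : s ∈ l := by
  match l, h with
  | a :: l, h => simp at h; exact h ▸ List.mem_cons_self ..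

theorem crossing {P : V → Prop} : ∀ {l : List V} {s t : V}, l.head? = some s →
    l.getLast? = some t → ¬ P s → P t → ∃ u w, (u, w) ∈ edgesOf l ∧ ¬ P u ∧ P w
  | [], s, t, h, _, _, _ => by simp at h
  | [x], s, t, h, h', hs, ht => by
    simp at h h'; exact absurd (h ▸ h' ▸ ht) hs
  | x :: y :: l, s, t, h, h', hs, ht => by
    obtain rfl : x = s := by simpa using h
    by_cases hy : P y
    · exact ⟨_, y, List.mem_cons_self .., hs, hy⟩
    · rw [List.getLast?_cons_cons] at h'
      obtain ⟨u, w, hm, hu, hw⟩ := crossing (l := y :: l) rfl h' hy ht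
      exact ⟨u, w, List.mem_cons_of_mem _ hm, hu, hw⟩


theorem segment_eq {p p1 q1 q2 : List V} {a z : V} (hp : p.Nodup)
    (hdec : p = p1 ++ a :: (q1 ++ z :: q2)) :
    FlowUpdate.segment p a z = a :: (q1 ++ [z]) := by
  subst hdec
  have hnd := List.nodup_append.1 hp
  have haP1 : a ∉ p1 := fun h => hnd.2.2 _ h _ (List.mem_cons_self ..) rfl
  have hndA := List.nodup_cons.1 hnd.2.1
  have haz : a ≠ z := fun h =>
    hndA.1 (h ▸ List.mem_append_right _ (List.mem_cons_self ..))
  have haq1 : a ∉ q1 := fun h => hndA.1 (List.mem_append_left _ h)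
  have hndQ := List.nodup_append.1 hndA.2
  have hzq1 : z ∉ q1 := fun h => hndQ.2.2 _ h _ (List.mem_cons_self ..) rfl
  unfold FlowUpdate.segment
  rw [dropWhile_all _ (fun x hx => by
    simp only [decide_eq_true_iff]; exact fun h => haP1 (h ▸ hx))]
  rw [List.dropWhile_cons_of_neg (by simp)]
  rw [show a :: (q1 ++ z :: q2) = (a :: q1) ++ z :: q2 by simp]
  rw [takeWhile_all _ (fun x hx => by
    simp only [decide_eq_true_iff]
    rcases List.mem_cons.1 hx with rfl | hx
    · exact haz
    · exact fun h => hzq1 (h ▸ hx)) (by simp)]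
  simp

theorem visits (ord : V → ℕ) (pO pN T : List V) (s t x : V)
    (pwO : pO.Pairwise fun u v => ord u < ord v)
    (pwN : pN.Pairwise fun u v => ord u < ord v)
    (hxO : x ∈ pO) (hxN : x ∈ pN)
    (hhO : pO.head? = some s) (hlO : pO.getLast? = some t)
    (hhT : T.head? = some s) (hlT : T.getLast? = some t)
    (hTE : ∀ e ∈ edgesOf T, e ∈ edgesOf pO ∨ e ∈ edgesOf pN) : x ∈ T := by
  by_cases hxs : x = s
  · exact hxs ▸ head?_mem hhT
  by_cases hxt : x = t
  · exact hxt ▸ List.mem_of_mem_getLast? (Option.mem_def.2 hlT)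
  have hsx : ord s < ord x := pairwise_head pwO hhO hxO hxs
  have hxt' : ord x < ord t := pairwise_last pwO hlO hxO hxt
  obtain ⟨u, w, hm, hu, hw⟩ :=
    crossing (P := fun v => ord x ≤ ord v) hhT hlT (by omega) (le_of_lt hxt')
  simp only [not_le] at hu
  rcases hTE _ hm with hE | hE
  · have hwO := (mem_of_mem_edges hE).2
    have hxw : ord w = ord x := by
      by_contra hne
      exact adj_no_between pwO hE hxO hu (lt_of_le_of_ne hw (Ne.symm hne))
    exact (pairwise_eq_of_ord pwO hwO hxO hxw) ▸ (mem_of_mem_edges hm).2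
  · have hwN := (mem_of_mem_edges hE).2
    have hxw : ord w = ord x := by
      by_contra hne
      exact adj_no_between pwN hE hxN hu (lt_of_le_of_ne hw (Ne.symm hne))
    exact (pairwise_eq_of_ord pwN hwN hxN hxw) ▸ (mem_of_mem_edges hm).2

theorem walk_new {k : ℕ} (G : UFN V k) (U : Set (V × Fin k)) (i : Fin k)
    (T : List V) (hNodupN : (G.new i).Nodup) (htO : G.t ∈ G.old i)
    (hE : ∀ e ∈ edgesOf T, G.active U i e)
    (hlastT : T.getLast? = some G.t) (z : V) :
    ∀ (q1 : List V) (c : V), c ∈ T → (c, i) ∈ U → (c :: (q1 ++ [z])) <:+: G.new i →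
      (∀ v ∈ q1, v ∉ G.old i) → c ≠ G.t →
      ∀ v ∈ q1, (v, i) ∈ U := by
  intro q1
  induction q1 with
  | nil => intro c _ _ _ _ _ v hv; cases hv
  | cons vh q1' ih =>
    intro c hcT hcU hinf hnotO hct
    obtain ⟨w, hw⟩ := exists_next hlastT hcT hct
    have hcw : (c, w) ∈ edgesOf (G.new i) := by
      rcases hE _ hw with ⟨_, hcU'⟩ | ⟨h, _⟩
      · exact absurd hcU hcU'
      · exact h
    have hcv : (c, vh) ∈ edgesOf (G.new i) := by
      refine edges_infix hinf ?_
      rw [show c :: ((vh :: q1') ++ [z]) = c :: vh :: (q1' ++ [z]) by simp]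
      exact List.mem_cons_self ..
    have hwv : w = vh := next_unique hNodupN hcw hcv
    have hvT : vh ∈ T := hwv ▸ (mem_of_mem_edges hw).2
    have hvO : vh ∉ G.old i := hnotO vh (List.mem_cons_self ..)
    have hvt : vh ≠ G.t := fun h => hvO (h ▸ htO)
    have hvU : (vh, i) ∈ U := by
      obtain ⟨w', hw'⟩ := exists_next hlastT hvT hvt
      rcases hE _ hw' with ⟨h1, _⟩ | ⟨_, h2⟩
      · exact absurd (mem_of_mem_edges h1).1 hvO
      · exact h2
    have hinf' : (vh :: (q1' ++ [z])) <:+: G.new i := by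
      refine List.IsInfix.trans ?_ hinf
      exact ⟨[c], [], by simp⟩
    intro v hv
    rcases List.mem_cons.1 hv with rfl | hv
    · exact hvU
    · exact ih vh hvT hvU hinf' (fun y hy => hnotO y (List.mem_cons_of_mem _ hy)) hvt v hv

theorem walk_old {k : ℕ} (G : UFN V k) (U : Set (V × Fin k)) (i : Fin k)
    (T : List V) (hNodupO : (G.old i).Nodup) (htN : G.t ∈ G.new i)
    (hE : ∀ e ∈ edgesOf T, G.active U i e)
    (hlastT : T.getLast? = some G.t) (z : V) :
    ∀ (q1 : List V) (c : V), c ∈ T → (c, i) ∉ U → (c :: (q1 ++ [z])) <:+: G.old i →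
      (∀ v ∈ q1, v ∉ G.new i) → c ≠ G.t →
      ∀ v ∈ q1, (v, i) ∉ U := by
  intro q1
  induction q1 with
  | nil => intro c _ _ _ _ _ v hv; cases hv
  | cons vh q1' ih =>
    intro c hcT hcU hinf hnotN hct
    obtain ⟨w, hw⟩ := exists_next hlastT hcT hct
    have hcw : (c, w) ∈ edgesOf (G.old i) := by
      rcases hE _ hw with ⟨h, _⟩ | ⟨_, hcU'⟩
      · exact h
      · exact absurd hcU' hcU
    have hcv : (c, vh) ∈ edgesOf (G.old i) := by
      refine edges_infix hinf ?_
      rw [show c :: ((vh :: q1') ++ [z]) = c :: vh :: (q1' ++ [z]) by simp]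
      exact List.mem_cons_self ..
    have hwv : w = vh := next_unique hNodupO hcw hcv
    have hvT : vh ∈ T := hwv ▸ (mem_of_mem_edges hw).2
    have hvN : vh ∉ G.new i := hnotN vh (List.mem_cons_self ..)
    have hvt : vh ≠ G.t := fun h => hvN (h ▸ htN)
    have hvU : (vh, i) ∉ U := by
      obtain ⟨w', hw'⟩ := exists_next hlastT hvT hvt
      rcases hE _ hw' with ⟨_, h2⟩ | ⟨h1, _⟩
      · exact h2
      · exact absurd (mem_of_mem_edges h1).1 hvN
    have hinf' : (vh :: (q1' ++ [z])) <:+: G.old i := by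
      refine List.IsInfix.trans ?_ hinf
      exact ⟨[c], [], by simp⟩
    intro v hv
    rcases List.mem_cons.1 hv with rfl | hv
    · exact hvU
    · exact ih vh hvT hvU hinf' (fun y hy => hnotN y (List.mem_cons_of_mem _ hy)) hvt v hv

theorem key {k : ℕ} (G : UFN V k)
    (hWF : G.WellFormed) (R : V × Fin k → ℕ) (hR : G.Feasible R)
    (b : UFN.Blk V k) (hb : G.IsBlk b) :
    ∃ q1n q1o : List V,
      G.blkNewSeg b = b.2.1 :: (q1n ++ [b.2.2]) ∧
      G.blkOldSeg b = b.2.1 :: (q1o ++ [b.2.2]) ∧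
      (∀ v ∈ q1n, R (v, b.1) < R (b.2.1, b.1)) ∧
      (∀ v ∈ q1o, R (b.2.1, b.1) < R (v, b.1)) := by
  obtain ⟨i, a, z⟩ := b
  obtain ⟨hpaths, hdag, -, -, -⟩ := hWF
  obtain ⟨ord, hord⟩ := hdag i
  obtain ⟨hOldP, hNewP⟩ := hpaths i
  obtain ⟨hOh, hOl, hOnd⟩ := hOldP
  obtain ⟨hNh, hNl, hNnd⟩ := hNewP
  have hordO : ∀ e ∈ edgesOf (G.old i), ord e.1 < ord e.2 :=
    fun e he => hord e (List.mem_append_left _ he)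
  have hordN : ∀ e ∈ edgesOf (G.new i), ord e.1 < ord e.2 :=
    fun e he => hord e (List.mem_append_right _ he)
  have pwO := pairwise_of_edges hordO
  have pwN := pairwise_of_edges hordN
  have hbE : (a, z) ∈ edgesOf (G.commons i) := hb
  have pwC : (G.commons i).Pairwise (fun u v => ord u < ord v) :=
    pwO.sublist List.filter_sublist
  have hmemC : ∀ x, x ∈ G.commons i ↔ x ∈ G.old i ∧ x ∈ G.new i := by
    intro x
    simp [UFN.commons, List.mem_filter]
  have haC : a ∈ G.commons i := (mem_of_mem_edges hbE).1
  have hzC : z ∈ G.commons i := (mem_of_mem_edges hbE).2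
  have haO : a ∈ G.old i := ((hmemC a).1 haC).1
  have haN : a ∈ G.new i := ((hmemC a).1 haC).2
  have hzO : z ∈ G.old i := ((hmemC z).1 hzC).1
  have hzN : z ∈ G.new i := ((hmemC z).1 hzC).2
  have hazord : ord a < ord z := edge_rel pwC hbE
  have hNoBetween : ∀ y, y ∈ G.old i → y ∈ G.new i → ord a < ord y → ord y < ord z → False :=
    fun y h1 h2 h3 h4 => adj_no_between pwC hbE ((hmemC y).2 ⟨h1, h2⟩) h3 h4
  -- decompose the old path
  obtain ⟨p1, p2, hdecO⟩ := List.append_of_mem haO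
  have hzP2 : z ∈ p2 := by
    rw [hdecO] at hzO pwO
    rcases List.mem_append.1 hzO with h | h
    · have := (List.pairwise_append.1 pwO).2.2 z h a (List.mem_cons_self ..)
      omega
    · rcases List.mem_cons.1 h with rfl | h
      · omega
      · exact h
  obtain ⟨q1o, q2o, hdecO2⟩ := List.append_of_mem hzP2
  have hdecOFull : G.old i = p1 ++ a :: (q1o ++ z :: q2o) := by
    rw [hdecO, hdecO2]
  have hOldSegEq : G.blkOldSeg (i, a, z) = a :: (q1o ++ [z]) :=
    segment_eq hOnd hdecOFull
  -- decompose the new path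
  obtain ⟨n1, n2, hdecN⟩ := List.append_of_mem haN
  have hzN2 : z ∈ n2 := by
    rw [hdecN] at hzN pwN
    rcases List.mem_append.1 hzN with h | h
    · have := (List.pairwise_append.1 pwN).2.2 z h a (List.mem_cons_self ..)
      omega
    · rcases List.mem_cons.1 h with rfl | h
      · omega
      · exact h
  obtain ⟨q1n, q2n, hdecN2⟩ := List.append_of_mem hzN2
  have hdecNFull : G.new i = n1 ++ a :: (q1n ++ z :: q2n) := by
    rw [hdecN, hdecN2]
  have hNewSegEq : G.blkNewSeg (i, a, z) = a :: (q1n ++ [z]) :=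
    segment_eq hNnd hdecNFull
  -- infixes
  have hInfO : (a :: (q1o ++ [z])) <:+: G.old i :=
    ⟨p1, q2o, by rw [hdecOFull]; simp⟩
  have hInfN : (a :: (q1n ++ [z])) <:+: G.new i :=
    ⟨n1, q2n, by rw [hdecNFull]; simp⟩
  -- properties of internal old vertices
  have hq1oProps : ∀ v ∈ q1o, v ∈ G.old i ∧ ord a < ord v ∧ ord v < ord z ∧ v ∉ G.new i := by
    intro v hv
    have hvO : v ∈ G.old i := by
      rw [hdecOFull]
      exact List.mem_append_right _ (List.mem_cons_of_mem _ (List.mem_append_left _ hv))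
    have pwO' := pwO
    rw [hdecOFull] at pwO'
    have pwA := (List.pairwise_append.1 pwO').2.1
    have hav : ord a < ord v :=
      (List.pairwise_cons.1 pwA).1 v (List.mem_append_left _ hv)
    have pwQO := (List.pairwise_cons.1 pwA).2
    have hvz : ord v < ord z :=
      (List.pairwise_append.1 pwQO).2.2 v hv z (List.mem_cons_self ..)
    exact ⟨hvO, hav, hvz, fun hvN => hNoBetween v hvO hvN hav hvz⟩
  have hq1nProps : ∀ v ∈ q1n, v ∈ G.new i ∧ ord a < ord v ∧ ord v < ord z ∧ v ∉ G.old i := by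
    intro v hv
    have hvN : v ∈ G.new i := by
      rw [hdecNFull]
      exact List.mem_append_right _ (List.mem_cons_of_mem _ (List.mem_append_left _ hv))
    have pwN' := pwN
    rw [hdecNFull] at pwN'
    have pwA := (List.pairwise_append.1 pwN').2.1
    have hav : ord a < ord v :=
      (List.pairwise_cons.1 pwA).1 v (List.mem_append_left _ hv)
    have pwQN := (List.pairwise_cons.1 pwA).2
    have hvz : ord v < ord z :=
      (List.pairwise_append.1 pwQN).2.2 v hv z (List.mem_cons_self ..)
    exact ⟨hvN, hav, hvz, fun hvO => hNoBetween v hvO hvN hav hvz⟩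
  -- nodup facts
  have hndSegO : (a :: (q1o ++ [z])).Nodup := hOnd.sublist hInfO.sublist
  have hndSegN : (a :: (q1n ++ [z])).Nodup := hNnd.sublist hInfN.sublist
  have haq1o : a ∉ q1o := fun h =>
    (List.nodup_cons.1 hndSegO).1 (List.mem_append_left _ h)
  have haq1n : a ∉ q1n := fun h =>
    (List.nodup_cons.1 hndSegN).1 (List.mem_append_left _ h)
  -- a ≠ t
  have htO : G.t ∈ G.old i := List.mem_of_mem_getLast? (Option.mem_def.2 hOl)
  have htN : G.t ∈ G.new i := List.mem_of_mem_getLast? (Option.mem_def.2 hNl)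
  have hzt : ord z ≤ ord G.t := by
    by_cases h : z = G.t
    · rw [h]
    · exact le_of_lt (pairwise_last pwO hOl hzO h)
  have hat : a ≠ G.t := by
    intro h
    have := pairwise_last pwO hOl hzO (fun hz => by rw [hz, ← h] at hazord; omega)
    rw [← h] at this
    omega
  -- L1 : internal new vertices updated before a
  have hL1 : ∀ v ∈ q1n, R (v, i) < R (a, i) := by
    intro v hv
    obtain ⟨T, hT, -⟩ :=
      hR (R (a, i)) {(a, i)} (by rintro u rfl; rfl)
    set U : Set (V × Fin k) := {u | R u < R (a, i)} ∪ {(a, i)} with hU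
    obtain ⟨⟨hTh, hTl, hTchain, -⟩, -, -⟩ := hT i
    have hTE : ∀ e ∈ edgesOf (T i), G.active U i e :=
      (chain'_iff_edges _ (T i)).1 hTchain
    have hTGE : ∀ e ∈ edgesOf (T i), e ∈ edgesOf (G.old i) ∨ e ∈ edgesOf (G.new i) :=
      fun e he => (hTE e he).elim (fun h => Or.inl h.1) (fun h => Or.inr h.1)
    have haT : a ∈ T i :=
      visits ord (G.old i) (G.new i) (T i) G.s G.t a pwO pwN haO haN hOh hOl hTh hTl hTGE
    have := walk_new G U i (T i) hNnd htO hTE hTl z q1n a haT (Or.inr rfl) hInfN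
      (fun y hy => (hq1nProps y hy).2.2.2) hat v hv
    rcases this with h | h
    · exact h
    · have hva : v = a := congrArg Prod.fst h
      exact absurd (hva ▸ hv) haq1n
  -- L2 : internal old vertices updated after a
  have hL2 : ∀ w ∈ q1o, R (a, i) < R (w, i) := by
    intro w hw
    by_contra hcon
    have hle : R (w, i) ≤ R (a, i) := Nat.le_of_not_lt fun h => hcon h
    obtain ⟨T, hT, -⟩ :=
      hR (R (w, i)) {(w, i)} (by rintro u rfl; rfl)
    set U : Set (V × Fin k) := {u | R u < R (w, i)} ∪ {(w, i)} with hU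
    obtain ⟨⟨hTh, hTl, hTchain, -⟩, -, -⟩ := hT i
    have hTE : ∀ e ∈ edgesOf (T i), G.active U i e :=
      (chain'_iff_edges _ (T i)).1 hTchain
    have hTGE : ∀ e ∈ edgesOf (T i), e ∈ edgesOf (G.old i) ∨ e ∈ edgesOf (G.new i) :=
      fun e he => (hTE e he).elim (fun h => Or.inl h.1) (fun h => Or.inr h.1)
    have haT : a ∈ T i :=
      visits ord (G.old i) (G.new i) (T i) G.s G.t a pwO pwN haO haN hOh hOl hTh hTl hTGE
    have haU : (a, i) ∉ U := by
      rintro (h | h)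
      · simp only [Set.mem_setOf_eq] at h; omega
      · have haw : a = w := congrArg Prod.fst h
        exact haq1o (by rw [haw]; exact hw)
    have := walk_old G U i (T i) hOnd htN hTE hTl z q1o a haT haU hInfO
      (fun y hy => (hq1oProps y hy).2.2.2) hat w hw
    exact this (Or.inr rfl)
  exact ⟨q1n, q1o, hNewSegEq, hOldSegEq, hL1, hL2⟩

end FU3

open FlowUpdate in
/-- If a block has at least 2 old-flow edges and at least 2
update-flow edges, its updates occupy at least 3 distinct rounds in any
feasible update sequence; and a nontrivial block (whose old- and update-path
edges differ) always requires at least 2 distinct rounds. -/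
theorem stmt3 {V : Type} [DecidableEq V] {k : ℕ} (G : UFN V k)
    (hWF : G.WellFormed) (R : V × Fin k → ℕ) (hR : G.Feasible R)
    (b : UFN.Blk V k) (hb : G.IsBlk b) :
    (2 ≤ (edgesOf (G.blkOldSeg b)).length → 2 ≤ (edgesOf (G.blkNewSeg b)).length →
      3 ≤ (((G.blkNewSeg b).dropLast ++ (G.blkOldSeg b).dropLast).map
            (fun v => R (v, b.1))).toFinset.card) ∧
    (edgesOf (G.blkOldSeg b) ≠ edgesOf (G.blkNewSeg b) →
      2 ≤ (((G.blkNewSeg b).dropLast ++ (G.blkOldSeg b).dropLast).map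
            (fun v => R (v, b.1))).toFinset.card) := by
  obtain ⟨q1n, q1o, hN, hO, hL1, hL2⟩ := FU3.key G hWF R hR b hb
  have hdN : (G.blkNewSeg b).dropLast = b.2.1 :: q1n := by
    rw [hN, show b.2.1 :: (q1n ++ [b.2.2]) = (b.2.1 :: q1n) ++ [b.2.2] by simp,
      List.dropLast_concat]
  have hdO : (G.blkOldSeg b).dropLast = b.2.1 :: q1o := by
    rw [hO, show b.2.1 :: (q1o ++ [b.2.2]) = (b.2.1 :: q1o) ++ [b.2.2] by simp,
      List.dropLast_concat]
  have hmem : ∀ x, (x ∈ b.2.1 :: q1n ∨ x ∈ b.2.1 :: q1o) →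
      R (x, b.1) ∈ (((G.blkNewSeg b).dropLast ++ (G.blkOldSeg b).dropLast).map
        (fun v => R (v, b.1))).toFinset := by
    intro x hx
    rw [List.mem_toFinset, List.mem_map]
    refine ⟨x, ?_, rfl⟩
    rw [hdN, hdO, List.mem_append]
    exact hx
  constructor
  · intro h2o h2n
    rw [hO, FU3.edgesOf_length] at h2o
    rw [hN, FU3.edgesOf_length] at h2n
    simp only [List.length_cons, List.length_append, List.length_singleton] at h2o h2n
    rcases q1o with - | ⟨w, q1o'⟩
    · simp at h2o
    rcases q1n with - | ⟨v, q1n'⟩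
    · simp at h2n
    have h1 := hL1 v (List.mem_cons_self ..)
    have h2 := hL2 w (List.mem_cons_self ..)
    have hsub : ({R (v, b.1), R (b.2.1, b.1), R (w, b.1)} : Finset ℕ) ⊆
        (((G.blkNewSeg b).dropLast ++ (G.blkOldSeg b).dropLast).map
          (fun v => R (v, b.1))).toFinset := by
      refine Finset.insert_subset_iff.2 ⟨?_, Finset.insert_subset_iff.2 ⟨?_, ?_⟩⟩
      · exact hmem v (Or.inl (List.mem_cons_of_mem _ (List.mem_cons_self ..)))
      · exact hmem b.2.1 (Or.inl (List.mem_cons_self ..))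
      · exact Finset.singleton_subset_iff.2
          (hmem w (Or.inr (List.mem_cons_of_mem _ (List.mem_cons_self ..))))
    have hcard : ({R (v, b.1), R (b.2.1, b.1), R (w, b.1)} : Finset ℕ).card = 3 := by
      rw [Finset.card_insert_of_notMem (by simp; omega),
        Finset.card_insert_of_notMem (by simp; omega), Finset.card_singleton]
    calc 3 = _ := hcard.symm
    _ ≤ _ := Finset.card_le_card hsub
  · intro hne
    rcases q1n with - | ⟨v, q1n'⟩
    · rcases q1o with - | ⟨w, q1o'⟩
      · exact absurd (by rw [hO, hN]) hne
      · have h2 := hL2 w (List.mem_cons_self ..)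
        have hsub : ({R (b.2.1, b.1), R (w, b.1)} : Finset ℕ) ⊆
            (((G.blkNewSeg b).dropLast ++ (G.blkOldSeg b).dropLast).map
              (fun v => R (v, b.1))).toFinset := by
          refine Finset.insert_subset_iff.2 ⟨?_, ?_⟩
          · exact hmem b.2.1 (Or.inl (List.mem_cons_self ..))
          · exact Finset.singleton_subset_iff.2
              (hmem w (Or.inr (List.mem_cons_of_mem _ (List.mem_cons_self ..))))
        have hcard : ({R (b.2.1, b.1), R (w, b.1)} : Finset ℕ).card = 2 := by
          rw [Finset.card_insert_of_notMem (by simp; omega), Finset.card_singleton]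
        calc 2 = _ := hcard.symm
        _ ≤ _ := Finset.card_le_card hsub
    · have h1 := hL1 v (List.mem_cons_self ..)
      have hsub : ({R (v, b.1), R (b.2.1, b.1)} : Finset ℕ) ⊆
          (((G.blkNewSeg b).dropLast ++ (G.blkOldSeg b).dropLast).map
            (fun v => R (v, b.1))).toFinset := by
        refine Finset.insert_subset_iff.2 ⟨?_, ?_⟩
        · exact hmem v (Or.inl (List.mem_cons_of_mem _ (List.mem_cons_self ..)))
        · exact Finset.singleton_subset_iff.2 (hmem b.2.1 (Or.inl (List.mem_cons_self ..)))
      have hcard : ({R (v, b.1), R (b.2.1, b.1)} : Finset ℕ).card = 2 := by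
        rw [Finset.card_insert_of_notMem (by simp; omega), Finset.card_singleton]
      calc 2 = _ := hcard.symm
      _ ≤ _ := Finset.card_le_card hsub
end
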